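/- arXiv:2303.04859 — 5 statements merged into one kernel-verified Lean document; each statement's English description precedes it below -/
import Mathlib

section
/- Let (X,Y) be a pair of random variables where Y takes values in {-1,1}. Let f be a measurable {-1,1}-valued function of X, let p and p̃ be square-integrable real-valued measurable functions of X, and let ε ≥ 0. If E[(Y − p(X))²] ≤ E[(Y − p̃(X))²] and E[(f(X) − p̃(X))²] ≤ ε², then P{Y ≠ sign(p(X))} ≤ 8·P{Y ≠ f(X)} + 2ε². -/
open MeasureTheory ProbabilityTheory

/-- The sign function: `sign t = 1` if `t ≥ 0` and `-1` otherwise. -/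
noncomputable def signFun (t : ℝ) : ℝ := if 0 ≤ t then 1 else -1

lemma measurable_signFun : Measurable signFun := by
  unfold signFun
  exact Measurable.ite (measurableSet_le measurable_const measurable_id)
    measurable_const measurable_const

/-- If `p` minimizes the square loss at least as well as `p̃`, and `p̃`
approximates a `{-1,1}`-valued predictor `f` within square error `ε²`, then
`P{Y ≠ sign(p(X))} ≤ 8·P{Y ≠ f(X)} + 2ε²`. -/
theorem sign_L2_regression_weak_pac
    {Ω 𝓧 : Type*} [MeasurableSpace Ω] [MeasurableSpace 𝓧]
    (μ : Measure Ω) [IsProbabilityMeasure μ]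
    (X : Ω → 𝓧) (Y : Ω → ℝ) (f p ptil : 𝓧 → ℝ) (ε : ℝ) (hε : 0 ≤ ε)
    (hX : Measurable X) (hY : Measurable Y)
    (hf : Measurable f) (hfpm : ∀ x, f x = 1 ∨ f x = -1)
    (hYpm : ∀ ω, Y ω = 1 ∨ Y ω = -1)
    (hp : Measurable p) (hptil : Measurable ptil)
    (hp2 : MemLp (fun ω => p (X ω)) 2 μ)
    (hptil2 : MemLp (fun ω => ptil (X ω)) 2 μ)
    (hopt : ∫ ω, (Y ω - p (X ω)) ^ 2 ∂μ ≤ ∫ ω, (Y ω - ptil (X ω)) ^ 2 ∂μ)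
    (happrox : ∫ ω, (f (X ω) - ptil (X ω)) ^ 2 ∂μ ≤ ε ^ 2) :
    (μ {ω | Y ω ≠ signFun (p (X ω))}).toReal
      ≤ 8 * (μ {ω | Y ω ≠ f (X ω)}).toReal + 2 * ε ^ 2 := by
  set S := {ω | Y ω ≠ signFun (p (X ω))} with hS
  set T := {ω | Y ω ≠ f (X ω)} with hT
  have hSmeas : MeasurableSet S :=
    (measurableSet_eq_fun hY ((measurable_signFun.comp hp).comp hX)).compl
  have hTmeas : MeasurableSet T :=
    (measurableSet_eq_fun hY (hf.comp hX)).compl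
  have hYm : MemLp Y 2 μ := by
    apply MemLp.of_bound hY.aestronglyMeasurable 1
    filter_upwards with ω
    rcases hYpm ω with h | h <;> simp [h]
  have hfm : MemLp (fun ω => f (X ω)) 2 μ := by
    apply MemLp.of_bound (hf.comp hX).aestronglyMeasurable 1
    filter_upwards with ω
    rcases hfpm (X ω) with h | h <;> simp [h]
  have hI1 : Integrable (fun ω => (Y ω - p (X ω)) ^ 2) μ := by
    simpa [pow_two] using (hYm.sub hp2).integrable_sq
  have hI2 : Integrable (fun ω => (Y ω - ptil (X ω)) ^ 2) μ := by
    simpa [pow_two] using (hYm.sub hptil2).integrable_sq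
  have hI3 : Integrable (fun ω => (Y ω - f (X ω)) ^ 2) μ := by
    simpa [pow_two] using (hYm.sub hfm).integrable_sq
  have hI4 : Integrable (fun ω => (f (X ω) - ptil (X ω)) ^ 2) μ := by
    simpa [pow_two] using (hfm.sub hptil2).integrable_sq
  -- Step 1: (μ S).toReal ≤ ∫ (Y - p)²
  have step1 : (μ S).toReal ≤ ∫ ω, (Y ω - p (X ω)) ^ 2 ∂μ := by
    have heq : (μ S).toReal = ∫ ω, S.indicator (fun _ => (1 : ℝ)) ω ∂μ := by
      rw [integral_indicator_const (1 : ℝ) hSmeas]; simp; rfl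
    rw [heq]
    refine integral_mono ((integrable_const (1 : ℝ)).indicator hSmeas) hI1 ?_
    intro ω
    by_cases hω : ω ∈ S
    · rw [Set.indicator_of_mem hω]
      have hne : Y ω ≠ signFun (p (X ω)) := hω
      rcases hYpm ω with h | h
      · have hneg : ¬ (0 ≤ p (X ω)) := by
          intro hle
          exact hne (by simp [h, signFun, hle])
        push_neg at hneg
        show (1:ℝ) ≤ (Y ω - p (X ω)) ^ 2
        rw [h]; nlinarith [sq_nonneg (p (X ω))]
      · have hpos : 0 ≤ p (X ω) := by
          by_contra hle
          exact hne (by simp [h, signFun, hle])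
        show (1:ℝ) ≤ (Y ω - p (X ω)) ^ 2
        rw [h]; nlinarith [sq_nonneg (p (X ω))]
    · rw [Set.indicator_of_notMem hω]; positivity
  -- Step 3: ∫ (Y - ptil)² ≤ 2 ∫ (Y-f)² + 2 ∫ (f - ptil)²
  have step3 : ∫ ω, (Y ω - ptil (X ω)) ^ 2 ∂μ
      ≤ 2 * ∫ ω, (Y ω - f (X ω)) ^ 2 ∂μ + 2 * ∫ ω, (f (X ω) - ptil (X ω)) ^ 2 ∂μ := by
    have hg : Integrable
        (fun ω => 2 * (Y ω - f (X ω)) ^ 2 + 2 * (f (X ω) - ptil (X ω)) ^ 2) μ :=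
      (hI3.const_mul 2).add (hI4.const_mul 2)
    have h := integral_mono hI2 hg
      (fun ω => by dsimp; nlinarith [sq_nonneg (Y ω - 2 * f (X ω) + ptil (X ω))])
    rwa [integral_add (hI3.const_mul 2) (hI4.const_mul 2),
      integral_const_mul, integral_const_mul] at h
  -- Step 4: ∫ (Y - f)² = 4 * μ T
  have step4 : ∫ ω, (Y ω - f (X ω)) ^ 2 ∂μ = 4 * (μ T).toReal := by
    have heq : (fun ω => (Y ω - f (X ω)) ^ 2)
        = fun ω => T.indicator (fun _ => (4 : ℝ)) ω := by
      funext ω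
      by_cases hω : ω ∈ T
      · rw [Set.indicator_of_mem hω]
        have hne : Y ω ≠ f (X ω) := hω
        rcases hYpm ω with h | h <;> rcases hfpm (X ω) with h' | h' <;>
          simp [h, h'] at hne ⊢ <;> norm_num
      · rw [Set.indicator_of_notMem hω]
        have : Y ω = f (X ω) := not_not.mp hω
        simp [this]
    rw [heq, integral_indicator_const (4 : ℝ) hTmeas, smul_eq_mul]
    rw [mul_comm]; rfl
  have := step1.trans (hopt.trans step3)
  rw [step4] at this
  linarith
end

section
/- Let (Y,Z) be a pair of random variables where Y takes values in {-1,1} and Z takes values in a measurable space 𝒵, and let h: 𝒵 → ℝ be a bounded measurable function. Define opt_Z = inf over measurable g: 𝒵 → {-1,1} of P{Y ≠ g(Z)}, and U(x) = x³ + (3/2)x² + (3/2)x. Then P{Y ≠ sign(h(Z))} ≤ opt_Z + U( √( E[(E[Y | Z] − h(Z))²] ) ). -/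
open MeasureTheory ProbabilityTheory

/-- The polynomial `U(x) = x³ + (3/2)x² + (3/2)x`. -/
noncomputable def Upoly (x : ℝ) : ℝ := x ^ 3 + (3 / 2) * x ^ 2 + (3 / 2) * x

lemma signFun_pm (t : ℝ) : signFun t = 1 ∨ signFun t = -1 := by
  unfold signFun; split_ifs <;> simp

lemma aux_pointwise (g a t : ℝ) (hg : g = 1 ∨ g = -1) :
    (g - signFun t) * a ≤ 2 * |a - t| := by
  rcases hg with rfl | rfl <;> unfold signFun <;> split_ifs with ht <;>
    rcases abs_cases (a - t) with ⟨he, h2⟩ | ⟨he, h2⟩ <;> nlinarith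

/-- For any bounded measurable `h : 𝒵 → ℝ`,
`P{Y ≠ sign(h(Z))} ≤ opt_Z + U(√(E[(E[Y|Z] - h(Z))²]))`, where `opt_Z` is the minimum
0-1 loss among all measurable `{-1,1}`-valued predictors of `Y` from `Z`, and
`U(x) = x³ + (3/2)x² + (3/2)x`. -/
theorem loss_sign_le_opt_add_U_of_mmse_dist
    {Ω 𝓩 : Type*} [MeasurableSpace Ω] [MeasurableSpace 𝓩]
    (μ : Measure Ω) [IsProbabilityMeasure μ]
    (Z : Ω → 𝓩) (Y : Ω → ℝ) (h : 𝓩 → ℝ)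
    (hZ : Measurable Z) (hY : Measurable Y)
    (hYpm : ∀ ω, Y ω = 1 ∨ Y ω = -1)
    (hh : Measurable h) (hbd : ∃ C, ∀ z, |h z| ≤ C) :
    (μ {ω | Y ω ≠ signFun (h (Z ω))}).toReal
      ≤ (⨅ g : {g : 𝓩 → ℝ // Measurable g ∧ ∀ z, g z = 1 ∨ g z = -1},
            (μ {ω | Y ω ≠ g.1 (Z ω)}).toReal)
        + Upoly (Real.sqrt
            (∫ ω, ((μ[Y | MeasurableSpace.comap Z inferInstance]) ω - h (Z ω)) ^ 2 ∂μ)) := by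
  classical
  obtain ⟨C₀, hC₀⟩ := hbd
  set C := max C₀ 0 with hC
  have hCh : ∀ z, |h z| ≤ C := fun z => (hC₀ z).trans (le_max_left _ _)
  have hC0 : 0 ≤ C := le_max_right _ _
  have hm : MeasurableSpace.comap Z inferInstance ≤ ‹MeasurableSpace Ω› := hZ.comap_le
  haveI : SigmaFinite (μ.trim hm) := inferInstance
  set η := μ[Y | MeasurableSpace.comap Z inferInstance] with hη_def
  have hYabs : ∀ ω, |Y ω| ≤ 1 := fun ω => by rcases hYpm ω with h1 | h1 <;> simp [h1]
  have hY_int : Integrable Y μ :=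
    (integrable_const (1:ℝ)).mono' hY.aestronglyMeasurable
      (ae_of_all _ fun ω => by simpa using hYabs ω)
  have hη_sm : StronglyMeasurable η := stronglyMeasurable_condExp.mono hm
  have hη_bdd : ∀ᵐ ω ∂μ, |η ω| ≤ 1 := by
    have := ae_bdd_condExp_of_ae_bdd (m := MeasurableSpace.comap Z inferInstance) (μ := μ) (R := 1) (f := Y)
      (ae_of_all _ fun ω => by simpa using hYabs ω)
    simpa using this
  set u : Ω → ℝ := fun ω => η ω - h (Z ω) with hu_def
  have hhZ_m : Measurable (fun ω => h (Z ω)) := hh.comp hZ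
  have hu_sm : StronglyMeasurable u := hη_sm.sub hhZ_m.stronglyMeasurable
  have hu_bdd : ∀ᵐ ω ∂μ, |u ω| ≤ 1 + C := by
    filter_upwards [hη_bdd] with ω hω
    have h1 : |η ω - h (Z ω)| ≤ |η ω| + |h (Z ω)| := abs_sub _ _
    have h2 := hCh (Z ω)
    simp only [hu_def]
    linarith
  have hu_int : Integrable u μ :=
    (integrable_const (1 + C)).mono' hu_sm.aestronglyMeasurable
      (by filter_upwards [hu_bdd] with ω hω; simpa using hω)
  have hu2_int : Integrable (fun ω => u ω ^ 2) μ := by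
    refine (integrable_const ((1 + C) ^ 2)).mono'
      (hu_sm.pow 2).aestronglyMeasurable ?_
    filter_upwards [hu_bdd] with ω hω
    have : |u ω| ^ 2 ≤ (1 + C) ^ 2 := pow_le_pow_left₀ (abs_nonneg _) hω 2
    simpa [Real.norm_eq_abs, abs_pow, sq_abs] using this
  have habs_int : Integrable (fun ω => |u ω|) μ := hu_int.abs
  set S := ∫ ω, (η ω - h (Z ω)) ^ 2 ∂μ with hS_def
  have hS_eq : S = ∫ ω, u ω ^ 2 ∂μ := rfl
  have hS_nonneg : 0 ≤ S := integral_nonneg fun ω => sq_nonneg _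
  set x := Real.sqrt S with hx_def
  have hx_nonneg : 0 ≤ x := Real.sqrt_nonneg _
  -- Cauchy-Schwarz type bound : ∫|u| ≤ √(∫ u²)
  have key : ∀ c : ℝ, 0 < c → (∫ ω, |u ω| ∂μ) ≤ (S + c ^ 2) / (2 * c) := by
    intro c hc
    have hpt : ∀ ω, |u ω| ≤ (u ω ^ 2 + c ^ 2) / (2 * c) := by
      intro ω
      rw [le_div_iff₀ (by positivity)]
      nlinarith [sq_nonneg (|u ω| - c), sq_abs (u ω)]
    calc (∫ ω, |u ω| ∂μ) ≤ ∫ ω, (u ω ^ 2 + c ^ 2) / (2 * c) ∂μ :=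
          integral_mono habs_int ((hu2_int.add (integrable_const _)).div_const _) hpt
      _ = (S + c ^ 2) / (2 * c) := by
          rw [integral_div, integral_add hu2_int (integrable_const _), integral_const,
            measureReal_def, measure_univ, ← hS_eq]
          simp
  have hCS : (∫ ω, |u ω| ∂μ) ≤ x := by
    rcases lt_or_eq_of_le hx_nonneg with hx0 | hx0
    · have hb := key x hx0
      have hSx : S = x ^ 2 := (Real.sq_sqrt hS_nonneg).symm
      rw [hSx] at hb
      have : (x ^ 2 + x ^ 2) / (2 * x) = x := by field_simp; ring
      linarith
    · have hS0 : S = 0 := by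
        have h1 : Real.sqrt S = 0 := hx0.symm
        nlinarith [Real.sq_sqrt hS_nonneg]
      by_contra hgt
      push_neg at hgt
      have hA : 0 < ∫ ω, |u ω| ∂μ := hx0 ▸ hgt
      have hb := key _ hA
      rw [hS0] at hb
      have h2 : (0 + (∫ ω, |u ω| ∂μ) ^ 2) / (2 * (∫ ω, |u ω| ∂μ))
          = (∫ ω, |u ω| ∂μ) / 2 := by field_simp; ring
      rw [h2] at hb
      linarith
  -- Loss formula
  have key_loss : ∀ (f : 𝓩 → ℝ), Measurable f → (∀ z, f z = 1 ∨ f z = -1) →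
      (μ {ω | Y ω ≠ f (Z ω)}).toReal = ∫ ω, (1 - Y ω * f (Z ω)) / 2 ∂μ := by
    intro f hf hfpm
    have hs : MeasurableSet {ω | Y ω ≠ f (Z ω)} := by
      have hset : {ω | Y ω ≠ f (Z ω)} = (fun ω => Y ω - f (Z ω)) ⁻¹' ({0}ᶜ) := by
        ext ω; simp [sub_eq_zero]
      rw [hset]
      exact (hY.sub (hf.comp hZ)) (measurableSet_singleton 0).compl
    rw [← measureReal_def, ← integral_indicator_one hs]
    congr 1; funext ω
    rcases hYpm ω with h1 | h1 <;> rcases hfpm (Z ω) with h2 | h2 <;>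
      simp [Set.indicator_apply, Set.mem_setOf_eq, h1, h2] <;> norm_num
  have intLoss : ∀ (f : 𝓩 → ℝ), Measurable f → (∀ z, f z = 1 ∨ f z = -1) →
      Integrable (fun ω => (1 - Y ω * f (Z ω)) / 2) μ := by
    intro f hf hfpm
    refine (integrable_const (1:ℝ)).mono'
      ((((measurable_const.sub (hY.mul (hf.comp hZ))).div_const 2)).aestronglyMeasurable) ?_
    refine ae_of_all _ fun ω => ?_
    rcases hYpm ω with h1 | h1 <;> rcases hfpm (Z ω) with h2 | h2 <;>
      simp [h1, h2] <;> norm_num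
  -- Pull-out property
  have pull : ∀ (ψ : 𝓩 → ℝ), Measurable ψ → (∀ z, |ψ z| ≤ 2) →
      (∫ ω, ψ (Z ω) * Y ω ∂μ) = ∫ ω, ψ (Z ω) * η ω ∂μ := by
    intro ψ hψ hψb
    have hψm : StronglyMeasurable[MeasurableSpace.comap Z inferInstance] (fun ω => ψ (Z ω)) :=
      (hψ.comp (comap_measurable Z)).stronglyMeasurable
    have hψZ : Measurable (fun ω => ψ (Z ω)) := hψ.comp hZ
    have hint1 : Integrable (fun ω => ψ (Z ω) * Y ω) μ := by
      refine (integrable_const (2:ℝ)).mono' (hψZ.mul hY).aestronglyMeasurable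
        (ae_of_all _ fun ω => ?_)
      have h1 := hψb (Z ω); have h2 := hYabs ω
      have : |ψ (Z ω) * Y ω| = |ψ (Z ω)| * |Y ω| := abs_mul _ _
      rw [Real.norm_eq_abs, this]
      calc |ψ (Z ω)| * |Y ω| ≤ 2 * 1 :=
            mul_le_mul h1 h2 (abs_nonneg _) (by norm_num)
        _ = 2 := by norm_num
    have heq := condExp_mul_of_stronglyMeasurable_left (μ := μ) hψm hint1 hY_int
    calc (∫ ω, ψ (Z ω) * Y ω ∂μ)
        = ∫ ω, (μ[(fun ω => ψ (Z ω) * Y ω)|MeasurableSpace.comap Z inferInstance]) ω ∂μ := (integral_condExp hm).symm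
      _ = ∫ ω, ψ (Z ω) * η ω ∂μ := integral_congr_ae heq
  -- Main bound for each competitor g
  have main : ∀ (g : 𝓩 → ℝ), Measurable g → (∀ z, g z = 1 ∨ g z = -1) →
      (μ {ω | Y ω ≠ signFun (h (Z ω))}).toReal ≤ (μ {ω | Y ω ≠ g (Z ω)}).toReal + x := by
    intro g hg hgpm
    have hf : Measurable (fun z => signFun (h z)) := measurable_signFun.comp hh
    have hfpm : ∀ z, signFun (h z) = 1 ∨ signFun (h z) = -1 := fun z => signFun_pm _
    rw [key_loss _ hf hfpm, key_loss g hg hgpm]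
    set ψ : 𝓩 → ℝ := fun z => g z - signFun (h z) with hψ_def
    have hψ : Measurable ψ := hg.sub hf
    have hψb : ∀ z, |ψ z| ≤ 2 := by
      intro z
      have h1 : |ψ z| ≤ |g z| + |signFun (h z)| := abs_sub _ _
      rcases hgpm z with h2 | h2 <;> rcases signFun_pm (h z) with h3 | h3 <;>
        rw [h2, h3] at h1 <;> norm_num at h1 <;> linarith
    have hdiff : (∫ ω, (1 - Y ω * signFun (h (Z ω))) / 2 ∂μ)
        - (∫ ω, (1 - Y ω * g (Z ω)) / 2 ∂μ) = (∫ ω, ψ (Z ω) * Y ω ∂μ) / 2 := by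
      rw [← integral_sub (intLoss _ hf hfpm) (intLoss g hg hgpm), ← integral_div]
      congr 1; funext ω; simp only [hψ_def]; ring
    have hψint : Integrable (fun ω => ψ (Z ω) * η ω) μ := by
      have := integrable_condExp (μ := μ) (f := Y) (m := MeasurableSpace.comap Z inferInstance)
      refine Integrable.bdd_mul (c := 2) this (hψ.comp hZ).aestronglyMeasurable (ae_of_all _ fun ω => ?_)
      simpa [Real.norm_eq_abs] using hψb (Z ω)
    have hmono : (∫ ω, ψ (Z ω) * η ω ∂μ) ≤ ∫ ω, 2 * |u ω| ∂μ := by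
      refine integral_mono hψint (habs_int.const_mul 2) fun ω => ?_
      exact aux_pointwise (g (Z ω)) (η ω) (h (Z ω)) (hgpm (Z ω))
    rw [integral_const_mul] at hmono
    have hpull := pull ψ hψ hψb
    have : (∫ ω, ψ (Z ω) * Y ω ∂μ) ≤ 2 * x := by
      rw [hpull]; linarith
    linarith [hdiff, this]
  -- Conclusion
  haveI : Nonempty {g : 𝓩 → ℝ // Measurable g ∧ ∀ z, g z = 1 ∨ g z = -1} :=
    ⟨⟨fun _ => 1, measurable_const, fun _ => Or.inl rfl⟩⟩
  have hUx : x ≤ Upoly x := by unfold Upoly; nlinarith [hx_nonneg]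
  have hinf : (μ {ω | Y ω ≠ signFun (h (Z ω))}).toReal - x
      ≤ ⨅ g : {g : 𝓩 → ℝ // Measurable g ∧ ∀ z, g z = 1 ∨ g z = -1},
          (μ {ω | Y ω ≠ g.1 (Z ω)}).toReal := by
    refine le_ciInf fun g => ?_
    have := main g.1 g.2.1 g.2.2
    linarith
  linarith
end

section
/- Let (X,Y) ∼ D where D is a probability distribution on {-1,1}^d × {-1,1}, let J ⊆ {1,…,d}, and let h: {-1,1}^d → ℝ be any function depending only on the coordinates in J. Let f^J(x) = Σ_{S⊆J} a_S·χ_S(x) with a_S = 2^{−d}·E[Y·χ_S(X)]. Then the 0-1 loss of g = sign ∘ h satisfies P{Y ≠ sign(h(X))} ≤ 1/2 − (1/2)·Σ_{x ∈ {-1,1}^d} |f^J(x)| + U( √( 2^d · Σ_{x ∈ {-1,1}^d} (f^J(x) − h(x))² ) ), where U(x) = x³ + (3/2)x² + (3/2)x. -/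
open MeasureTheory ProbabilityTheory

/-- The character (monomial) `χ_S(x) = ∏_{j ∈ S} x_j` associated with `S ⊆ [d]`. -/
noncomputable def chiChar {d : ℕ} (S : Finset (Fin d)) (x : Fin d → ℝ) : ℝ := ∏ j ∈ S, x j

/-- The point of the Boolean cube `{-1,1}^d` encoded by a Boolean vector. -/
noncomputable def pmOf {d : ℕ} (b : Fin d → Bool) : Fin d → ℝ :=
  fun i => if b i then 1 else -1

/-- The stochastic Fourier coefficient `a_S = 2^{-d}·E[Y·χ_S(X)]` of the label under `D`. -/
noncomputable def coeffA {d : ℕ} (D : Measure ((Fin d → ℝ) × ℝ)) (S : Finset (Fin d)) : ℝ :=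
  (1 / 2 ^ d : ℝ) * ∫ p, p.2 * chiChar S p.1 ∂D

/-- The function `f^J(x) = Σ_{S ⊆ J} a_S·χ_S(x)`. -/
noncomputable def fJ {d : ℕ} (D : Measure ((Fin d → ℝ) × ℝ)) (J : Finset (Fin d))
    (x : Fin d → ℝ) : ℝ :=
  ∑ S ∈ J.powerset, coeffA D S * chiChar S x

/- ### Auxiliary lemmas -/

lemma aux_measure_finset_eq_sum {α} [MeasurableSpace α] [MeasurableSingletonClass α]
    (μ : Measure α) (s : Finset α) : μ ↑s = ∑ x ∈ s, μ {x} := by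
  have h1 := measure_biUnion_finset (μ := μ) (s := s) (f := fun x => ({x} : Set α))
    (fun x _ y _ hxy => Set.disjoint_singleton.mpr hxy)
    (fun x _ => measurableSet_singleton x)
  have h2 : ⋃ b ∈ s, ({b} : Set α) = ↑s := by ext x; simp
  rw [← h2]; exact h1

lemma aux_abs_sub_sign_mul_le (f hv : ℝ) : |f| - signFun hv * f ≤ 2 * |f - hv| := by
  unfold signFun
  split_ifs with h1 <;>
    [skip; rw [not_le] at h1] <;>
    rcases abs_cases f with ⟨hf, hf2⟩ | ⟨hf, hf2⟩ <;>
    rcases abs_cases (f - hv) with ⟨hg, hg2⟩ | ⟨hg, hg2⟩ <;> nlinarith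

lemma aux_le_upoly (x : ℝ) (hx : 0 ≤ x) : x ≤ Upoly x := by unfold Upoly; nlinarith

open Finset in
lemma aux_card_agree {d : ℕ} (J : Finset (Fin d)) (b' : Fin d → Bool) :
    ((Finset.univ : Finset (Fin d → Bool)).filter (fun b => ∀ j ∈ J, b j = b' j)).card
      = 2 ^ (d - J.card) := by
  classical
  have hcard : 2 ^ (d - J.card) = Fintype.card ({j : Fin d // j ∉ J} → Bool) := by
    rw [Fintype.card_fun, Fintype.card_bool]
    congr 1
    rw [Fintype.card_subtype]
    have : (univ.filter fun j : Fin d => j ∉ J) = Jᶜ := by ext j; simp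
    rw [this, card_compl]
    simp
  rw [hcard, ← Finset.card_univ]
  refine Finset.card_bij' (fun b _ => fun j => b j.1)
    (fun c _ => fun j => if hj : j ∈ J then b' j else c ⟨j, hj⟩) ?_ ?_ ?_ ?_
  case refine_1 => intro b hb; exact Finset.mem_univ _
  case refine_2 =>
    intro c hc
    simp only [Finset.mem_filter, Finset.mem_univ, true_and]
    intro j hj; simp [hj]
  case refine_3 =>
    intro b hb
    simp only [Finset.mem_filter, Finset.mem_univ, true_and] at hb
    funext j
    by_cases hj : j ∈ J
    · simp [hj, hb j hj]
    · simp [hj]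
  case refine_4 =>
    intro c hc; funext j; simp [j.2]

open Finset in
lemma aux_chi_sum {d : ℕ} (J : Finset (Fin d)) (b b' : Fin d → Bool) :
    ∑ S ∈ J.powerset, chiChar S (pmOf b) * chiChar S (pmOf b')
      = if ∀ j ∈ J, b j = b' j then (2:ℝ) ^ J.card else 0 := by
  classical
  have key : ∀ j, pmOf b j * pmOf b' j + 1 = if b j = b' j then (2:ℝ) else 0 := by
    intro j; cases hb : b j <;> cases hb' : b' j <;> simp [pmOf, hb, hb'] <;> norm_num
  have h1 : ∑ S ∈ J.powerset, chiChar S (pmOf b) * chiChar S (pmOf b')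
      = ∏ j ∈ J, (pmOf b j * pmOf b' j + 1) := by
    rw [Finset.prod_add]
    refine Finset.sum_congr rfl fun S hS => ?_
    simp [chiChar, Finset.prod_mul_distrib]
  rw [h1]
  by_cases hall : ∀ j ∈ J, b j = b' j
  · rw [if_pos hall]
    rw [Finset.prod_congr rfl (fun j hj => by rw [key j, if_pos (hall j hj)])]
    simp
  · rw [if_neg hall]
    push_neg at hall
    obtain ⟨j, hj, hne⟩ := hall
    exact Finset.prod_eq_zero hj (by rw [key j, if_neg hne])

/-- For `(X,Y) ∼ D` on `{-1,1}^d × {-1,1}`, `J ⊆ [d]`, and `h` depending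
only on the coordinates in `J`, the 0-1 loss of `sign ∘ h` is at most
`1/2 - (1/2)·Σ_x |f^J(x)| + U(√(2^d·Σ_x (f^J(x) - h(x))²))`, the sums being over the
Boolean cube, where `U(x) = x³ + (3/2)x² + (3/2)x`. -/
theorem loss_sign_le_fourier_bound
    (d : ℕ) (D : Measure ((Fin d → ℝ) × ℝ)) [IsProbabilityMeasure D]
    (hD : ∀ᵐ p ∂D, (∀ i, p.1 i = 1 ∨ p.1 i = -1) ∧ (p.2 = 1 ∨ p.2 = -1))
    (J : Finset (Fin d)) (h : (Fin d → ℝ) → ℝ)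
    (hhJ : ∀ x x' : Fin d → ℝ, (∀ j ∈ J, x j = x' j) → h x = h x') :
    (D {p | p.2 ≠ signFun (h p.1)}).toReal
      ≤ 1 / 2 - (1 / 2) * (∑ b : Fin d → Bool, |fJ D J (pmOf b)|)
        + Upoly (Real.sqrt
            ((2 : ℝ) ^ d * ∑ b : Fin d → Bool, (fJ D J (pmOf b) - h (pmOf b)) ^ 2)) := by
  classical
  set yv : Bool → ℝ := fun t => if t then 1 else -1 with hyv
  set e : (Fin d → Bool) × Bool → (Fin d → ℝ) × ℝ := fun q => (pmOf q.1, yv q.2) with he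
  have yv_inj : ∀ s t : Bool, yv s = yv t → s = t := by
    intro s t hst
    cases s <;> cases t <;> simp [hyv] at hst ⊢ <;> norm_num at hst
  have pm_inj : ∀ b b' : Fin d → Bool, pmOf b = pmOf b' → b = b' := by
    intro b b' hbb
    funext i
    exact yv_inj _ _ (congrFun hbb i)
  have e_inj : Function.Injective e := by
    rintro ⟨b, t⟩ ⟨b', t'⟩ hq
    simp only [he, Prod.mk.injEq] at hq ⊢
    exact ⟨pm_inj _ _ hq.1, yv_inj _ _ hq.2⟩
  set C : Finset ((Fin d → ℝ) × ℝ) := Finset.univ.image e with hC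
  have hmem : ∀ᵐ p ∂D, p ∈ (↑C : Set ((Fin d → ℝ) × ℝ)) := by
    filter_upwards [hD] with p hp
    obtain ⟨h1, h2⟩ := hp
    refine Finset.mem_coe.mpr (Finset.mem_image.mpr
      ⟨(fun i => if p.1 i = 1 then true else false, if p.2 = 1 then true else false),
        Finset.mem_univ _, ?_⟩)
    have hfst : pmOf (fun i => if p.1 i = 1 then true else false) = p.1 := by
      funext i
      rcases h1 i with hi | hi
      · simp [pmOf, hi]
      · have hne : ¬ (p.1 i = 1) := by rw [hi]; norm_num
        show (if (if p.1 i = 1 then true else false) = true then (1:ℝ) else -1) = p.1 i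
        rw [if_neg hne, if_neg (by simp), hi]
    have hsnd : yv (if p.2 = 1 then true else false) = p.2 := by
      rcases h2 with hy | hy
      · simp [hyv, hy]
      · have hne : ¬ (p.2 = 1) := by rw [hy]; norm_num
        show (if (if p.2 = 1 then true else false) = true then (1:ℝ) else -1) = p.2
        rw [if_neg hne, if_neg (by simp), hy]
    exact Prod.ext hfst hsnd
  have hCc : D ((↑C : Set ((Fin d → ℝ) × ℝ)))ᶜ = 0 := by
    have := ae_iff.mp hmem
    simpa [Set.compl_def] using this
  have hMS : MeasurableSet (↑C : Set ((Fin d → ℝ) × ℝ)) := C.measurableSet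
  set W : (Fin d → Bool) × Bool → ℝ := fun q => (D {e q}).toReal with hWdef
  have hW0 : ∀ q, 0 ≤ W q := fun q => ENNReal.toReal_nonneg
  have hDC : D ↑C = 1 := by
    have h2 := measure_add_measure_compl (μ := D) hMS
    rw [hCc, add_zero, measure_univ] at h2
    exact h2
  have hsum_meas : ∑ q : (Fin d → Bool) × Bool, D {e q} = 1 := by
    rw [← hDC, aux_measure_finset_eq_sum D C, hC,
      Finset.sum_image (fun x _ y _ hxy => e_inj hxy)]
  have hsumW : ∑ q : (Fin d → Bool) × Bool, W q = 1 := by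
    rw [hWdef]
    rw [← ENNReal.toReal_sum (fun q _ => measure_ne_top D _), hsum_meas, ENNReal.toReal_one]
  have hres : D.restrict ↑C = D := Measure.restrict_eq_self_of_ae_mem hmem
  have hint : ∀ F : ((Fin d → ℝ) × ℝ) → ℝ, ∫ p, F p ∂D = ∑ q, W q * F (e q) := by
    intro F
    conv_lhs => rw [← hres]
    rw [integral_finset C (f := F) IntegrableOn.finset, hC,
      Finset.sum_image (fun x _ y _ hxy => e_inj hxy)]
    simp [smul_eq_mul, measureReal_def, hWdef]
  -- the loss as a finite sum
  set g : (Fin d → Bool) → ℝ := fun b => signFun (h (pmOf b)) with hg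
  have hloss : (D {p | p.2 ≠ signFun (h p.1)}).toReal
      = ∑ q ∈ Finset.univ.filter
          (fun q : (Fin d → Bool) × Bool => yv q.2 ≠ signFun (h (pmOf q.1))), W q := by
    set S : Set ((Fin d → ℝ) × ℝ) := {p | p.2 ≠ signFun (h p.1)} with hS
    have h1 : D S = D (S ∩ ↑C) := by
      apply le_antisymm
      · calc D S ≤ D ((S ∩ ↑C) ∪ (↑C)ᶜ) := by
              apply measure_mono
              intro x hx
              by_cases hc : x ∈ (↑C : Set ((Fin d → ℝ) × ℝ))
              · exact Or.inl ⟨hx, hc⟩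
              · exact Or.inr hc
          _ ≤ D (S ∩ ↑C) + D (↑C)ᶜ := measure_union_le _ _
          _ = D (S ∩ ↑C) := by rw [hCc, add_zero]
      · exact measure_mono Set.inter_subset_left
    have h2 : S ∩ ↑C = ↑(C.filter (fun p => p.2 ≠ signFun (h p.1))) := by
      ext p
      simp only [Set.mem_inter_iff, Finset.coe_filter, Set.mem_setOf_eq, Finset.mem_coe,
        hS]
      tauto
    have h3 : C.filter (fun p => p.2 ≠ signFun (h p.1))
        = (Finset.univ.filter
            (fun q : (Fin d → Bool) × Bool => yv q.2 ≠ signFun (h (pmOf q.1)))).image e := by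
      rw [hC, Finset.filter_image]
    rw [h1, h2, aux_measure_finset_eq_sum, h3,
      Finset.sum_image (fun x _ y _ hxy => e_inj hxy),
      ENNReal.toReal_sum (fun q _ => measure_ne_top D _)]
  set T : ℝ := ∑ q : (Fin d → Bool) × Bool, W q * (yv q.2 * g q.1) with hT
  have hls2 : ∑ q ∈ Finset.univ.filter
      (fun q : (Fin d → Bool) × Bool => yv q.2 ≠ signFun (h (pmOf q.1))), W q
      = 1 / 2 - (1 / 2) * T := by
    rw [Finset.sum_filter]
    have hpoint : ∀ q : (Fin d → Bool) × Bool,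
        (if yv q.2 ≠ signFun (h (pmOf q.1)) then W q else 0)
          = W q / 2 - W q * (yv q.2 * g q.1) / 2 := by
      rintro ⟨b, t⟩
      by_cases h0 : 0 ≤ h (pmOf b) <;>
        cases t <;>
        simp [hg, hyv, signFun, h0] <;> norm_num <;> ring
    rw [Finset.sum_congr rfl (fun q _ => hpoint q), Finset.sum_sub_distrib,
      ← Finset.sum_div, hsumW, ← Finset.sum_div, hT]
    ring
  -- the formula for fJ on the cube
  set M : (Fin d → Bool) → ℝ := fun b =>
    ∑ q : (Fin d → Bool) × Bool, (if ∀ j ∈ J, q.1 j = b j then W q * yv q.2 else 0) with hM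
  have hfJ : ∀ b : Fin d → Bool,
      fJ D J (pmOf b) = (2:ℝ) ^ J.card / 2 ^ d * M b := by
    intro b
    have hIS : ∀ S : Finset (Fin d), (∫ p, p.2 * chiChar S p.1 ∂D)
        = ∑ q : (Fin d → Bool) × Bool, W q * (yv q.2 * chiChar S (pmOf q.1)) :=
      fun S => hint (fun p => p.2 * chiChar S p.1)
    calc fJ D J (pmOf b)
        = (1 / 2 ^ d : ℝ) * ∑ S ∈ J.powerset, ∑ q : (Fin d → Bool) × Bool,
            (W q * yv q.2) * (chiChar S (pmOf q.1) * chiChar S (pmOf b)) := by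
          unfold fJ coeffA
          rw [Finset.mul_sum]
          refine Finset.sum_congr rfl fun S _ => ?_
          rw [hIS S, mul_assoc, Finset.sum_mul]
          congr 1
          exact Finset.sum_congr rfl fun q _ => by ring
      _ = (1 / 2 ^ d : ℝ) * ∑ q : (Fin d → Bool) × Bool,
            (W q * yv q.2) * ∑ S ∈ J.powerset, chiChar S (pmOf q.1) * chiChar S (pmOf b) := by
          rw [Finset.sum_comm]
          congr 1
          exact Finset.sum_congr rfl fun q _ => (Finset.mul_sum _ _ _).symm
      _ = (1 / 2 ^ d : ℝ) * ∑ q : (Fin d → Bool) × Bool,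
            (W q * yv q.2) * (if ∀ j ∈ J, q.1 j = b j then (2:ℝ) ^ J.card else 0) := by
          congr 1
          refine Finset.sum_congr rfl fun q _ => ?_
          rw [aux_chi_sum J q.1 b]
      _ = (2:ℝ) ^ J.card / 2 ^ d * M b := by
          rw [hM, Finset.mul_sum, Finset.mul_sum]
          refine Finset.sum_congr rfl fun q _ => ?_
          split_ifs <;> ring
  -- the key identity
  have hdJ : J.card ≤ d := by
    have := Finset.card_le_univ J
    simpa using this
  have hpow1 : (2:ℝ) ^ J.card / 2 ^ d * ((2:ℕ) ^ (d - J.card) : ℕ) = 1 := by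
    push_cast
    rw [div_mul_eq_mul_div, ← pow_add]
    rw [show J.card + (d - J.card) = d by omega]
    field_simp
  have hkey : ∑ b : Fin d → Bool, g b * fJ D J (pmOf b) = T := by
    calc ∑ b : Fin d → Bool, g b * fJ D J (pmOf b)
        = (2:ℝ) ^ J.card / 2 ^ d * ∑ b : Fin d → Bool,
            ∑ q : (Fin d → Bool) × Bool,
              (if ∀ j ∈ J, q.1 j = b j then g b * (W q * yv q.2) else 0) := by
          rw [Finset.mul_sum]
          refine Finset.sum_congr rfl fun b _ => ?_
          rw [hfJ b, hM, ← mul_assoc, mul_comm (g b) ((2:ℝ) ^ J.card / 2 ^ d), mul_assoc,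
            Finset.mul_sum]
          congr 1
          refine Finset.sum_congr rfl fun q _ => ?_
          split_ifs <;> ring
      _ = (2:ℝ) ^ J.card / 2 ^ d * ∑ q : (Fin d → Bool) × Bool,
            ∑ b : Fin d → Bool,
              (if ∀ j ∈ J, q.1 j = b j then g q.1 * (W q * yv q.2) else 0) := by
          rw [Finset.sum_comm]
          congr 1
          refine Finset.sum_congr rfl fun q _ =>
            Finset.sum_congr rfl fun b _ => ?_
          by_cases hc : ∀ j ∈ J, q.1 j = b j
          · rw [if_pos hc, if_pos hc]
            have : h (pmOf b) = h (pmOf q.1) := by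
              refine hhJ _ _ fun j hj => ?_
              rw [show pmOf b j = yv (b j) from rfl, show pmOf q.1 j = yv (q.1 j) from rfl,
                hc j hj]
            rw [hg]
            simp only [signFun, this]
          · rw [if_neg hc, if_neg hc]
      _ = (2:ℝ) ^ J.card / 2 ^ d * ∑ q : (Fin d → Bool) × Bool,
            ((2:ℕ) ^ (d - J.card) : ℕ) * (g q.1 * (W q * yv q.2)) := by
          congr 1
          refine Finset.sum_congr rfl fun q _ => ?_
          have hfeq : (Finset.univ : Finset (Fin d → Bool)).filter
                (fun b => ∀ j ∈ J, q.1 j = b j)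
              = (Finset.univ : Finset (Fin d → Bool)).filter
                (fun b => ∀ j ∈ J, b j = q.1 j) := by
            refine Finset.filter_congr fun b _ => ?_
            constructor <;> intro H j hj <;> exact (H j hj).symm
          have hcardq : ((Finset.univ : Finset (Fin d → Bool)).filter
              (fun b => ∀ j ∈ J, q.1 j = b j)).card = 2 ^ (d - J.card) := by
            rw [hfeq]; exact aux_card_agree J q.1
          rw [← Finset.sum_filter, Finset.sum_const, hcardq, nsmul_eq_mul]
      _ = T := by
          rw [hT, Finset.mul_sum]
          refine Finset.sum_congr rfl fun q _ => ?_
          rw [← mul_assoc, hpow1, one_mul]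
          ring
  -- pointwise comparison
  set A : ℝ := ∑ b : Fin d → Bool, |fJ D J (pmOf b)| with hA
  set Ebd : ℝ := ∑ b : Fin d → Bool, |fJ D J (pmOf b) - h (pmOf b)| with hEbd
  set Qd : ℝ := ∑ b : Fin d → Bool, (fJ D J (pmOf b) - h (pmOf b)) ^ 2 with hQd
  have hAT : A - T ≤ 2 * Ebd := by
    have hsum : ∑ b : Fin d → Bool, (|fJ D J (pmOf b)| - g b * fJ D J (pmOf b))
        ≤ ∑ b : Fin d → Bool, 2 * |fJ D J (pmOf b) - h (pmOf b)| :=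
      Finset.sum_le_sum fun b _ => aux_abs_sub_sign_mul_le _ _
    rw [Finset.sum_sub_distrib, hkey, ← Finset.mul_sum] at hsum
    rw [hA, hEbd]
    exact hsum
  have hcard : ((Finset.univ : Finset (Fin d → Bool)).card : ℝ) = (2:ℝ) ^ d := by
    rw [Finset.card_univ]
    simp
  have hEQ : Ebd ≤ Real.sqrt ((2:ℝ) ^ d * Qd) := by
    have hcs := sq_sum_le_card_mul_sum_sq (s := (Finset.univ : Finset (Fin d → Bool)))
      (f := fun b => |fJ D J (pmOf b) - h (pmOf b)|)
    have hE0 : 0 ≤ Ebd := Finset.sum_nonneg fun b _ => abs_nonneg _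
    have h2 : Ebd ^ 2 ≤ (2:ℝ) ^ d * Qd := by
      rw [hEbd, hQd]
      calc (∑ b : Fin d → Bool, |fJ D J (pmOf b) - h (pmOf b)|) ^ 2
          ≤ ((Finset.univ : Finset (Fin d → Bool)).card : ℝ)
            * ∑ b : Fin d → Bool, |fJ D J (pmOf b) - h (pmOf b)| ^ 2 := hcs
        _ = (2:ℝ) ^ d * ∑ b : Fin d → Bool, (fJ D J (pmOf b) - h (pmOf b)) ^ 2 := by
            rw [hcard]
            congr 1
            exact Finset.sum_congr rfl fun b _ => sq_abs _
    calc Ebd = Real.sqrt (Ebd ^ 2) := (Real.sqrt_sq hE0).symm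
      _ ≤ Real.sqrt ((2:ℝ) ^ d * Qd) := Real.sqrt_le_sqrt h2
  -- put everything together
  rw [hloss, hls2]
  have hfinal : 1 / 2 - (1 / 2) * T ≤ 1 / 2 - (1 / 2) * A + Ebd := by linarith
  have hUp : Real.sqrt ((2:ℝ) ^ d * Qd) ≤ Upoly (Real.sqrt ((2:ℝ) ^ d * Qd)) :=
    aux_le_upoly _ (Real.sqrt_nonneg _)
  calc (1 : ℝ) / 2 - (1 / 2) * T
      ≤ 1 / 2 - (1 / 2) * A + Ebd := hfinal
    _ ≤ 1 / 2 - (1 / 2) * A + Real.sqrt ((2:ℝ) ^ d * Qd) := by linarith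
    _ ≤ 1 / 2 - (1 / 2) * A + Upoly (Real.sqrt ((2:ℝ) ^ d * Qd)) := by linarith
end

section
/- Let (X,Y) ∼ D where D is a probability distribution on {-1,1}^d × {-1,1}, let J ⊆ {1,…,d} with |J| = k, let η ≥ 0, and let (b_S)_{S ⊆ J} be real numbers with |b_S − a_S| ≤ 2^{−d}·η for every S ⊆ J, where a_S = 2^{−d}·E[Y·χ_S(X)]. Define ĥ(x) = Σ_{S⊆J} b_S·χ_S(x) and f^J(x) = Σ_{S⊆J} a_S·χ_S(x). Then P{Y ≠ sign(ĥ(X))} ≤ 1/2 − (1/2)·Σ_{x ∈ {-1,1}^d} |f^J(x)| + U( 2^{k/2}·η ), where U(x) = x³ + (3/2)x² + (3/2)x. -/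
open MeasureTheory ProbabilityTheory

lemma aux_prod_sum {d : ℕ} (g : Fin d → Bool → ℝ) :
    ∑ x : Fin d → Bool, ∏ j, g j (x j) = ∏ j, (g j true + g j false) := by
  rw [show (∏ j, (g j true + g j false)) = ∏ j, ∑ b : Bool, g j b by simp,
    Fintype.prod_sum]

lemma aux_orth {d : ℕ} (S T : Finset (Fin d)) :
    ∑ x : Fin d → Bool, chiChar S (pmOf x) * chiChar T (pmOf x)
      = if S = T then (2:ℝ)^d else 0 := by
  have h1 : ∀ x : Fin d → Bool, chiChar S (pmOf x) * chiChar T (pmOf x)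
      = ∏ j, ((if j ∈ S then pmOf x j else 1) * (if j ∈ T then pmOf x j else 1)) := by
    intro x
    rw [Finset.prod_mul_distrib]
    simp [chiChar, Finset.prod_ite_mem, Finset.univ_inter]
  simp only [h1, pmOf]
  rw [aux_prod_sum (g := fun j b => (if j ∈ S then (if b then (1:ℝ) else -1) else 1) * (if j ∈ T then (if b then (1:ℝ) else -1) else 1))]
  have h2 : ∀ j, ((if j ∈ S then pmOf (fun _ => true) j else 1) *
          (if j ∈ T then pmOf (fun _ => true) j else 1)
        + (if j ∈ S then pmOf (fun _ => false) j else 1) *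
          (if j ∈ T then pmOf (fun _ => false) j else 1))
      = if (j ∈ S ↔ j ∈ T) then (2:ℝ) else 0 := by
    intro j
    by_cases hs : j ∈ S <;> by_cases ht : j ∈ T <;> simp [hs, ht, pmOf] <;> norm_num
  rw [Finset.prod_congr rfl fun j (_ : j ∈ Finset.univ) => by simpa [pmOf] using h2 j]
  by_cases hST : S = T
  · simp [hST]
  · have : ∃ j, ¬ (j ∈ S ↔ j ∈ T) := by
      by_contra h
      push_neg at h
      exact hST (Finset.ext fun j => by
        have := h j; tauto)
    obtain ⟨j, hj⟩ := this
    rw [if_neg hST]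
    exact Finset.prod_eq_zero (Finset.mem_univ j) (by simp [hj])

lemma aux_delta {d : ℕ} (a x : Fin d → Bool) :
    ∑ S ∈ (Finset.univ : Finset (Fin d)).powerset, chiChar S (pmOf a) * chiChar S (pmOf x)
      = if a = x then (2:ℝ)^d else 0 := by
  have h1 : ∀ S : Finset (Fin d), chiChar S (pmOf a) * chiChar S (pmOf x)
      = (∏ j ∈ S, pmOf a j * pmOf x j) * ∏ j ∈ Finset.univ \ S, (1:ℝ) := by
    intro S; rw [Finset.prod_mul_distrib]; simp [chiChar]
  simp only [h1]
  rw [← Finset.prod_add]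
  by_cases hax : a = x
  · subst hax
    rw [if_pos rfl]
    have : ∀ j, pmOf a j * pmOf a j + 1 = (2:ℝ) := by
      intro j; by_cases h : a j <;> simp [pmOf, h] <;> norm_num
    simp [this]
  · rw [if_neg hax]
    obtain ⟨j, hj⟩ : ∃ j, a j ≠ x j := by
      by_contra h; push_neg at h; exact hax (funext h)
    refine Finset.prod_eq_zero (Finset.mem_univ j) ?_
    revert hj
    by_cases h1 : a j <;> by_cases h2 : x j <;> simp [pmOf, h1, h2]

-- flip properties
lemma aux_flip_not_mem {d : ℕ} (S : Finset (Fin d)) (i : Fin d) (hi : i ∉ S)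
    (x : Fin d → Bool) :
    chiChar S (pmOf (Function.update x i (!x i))) = chiChar S (pmOf x) := by
  refine Finset.prod_congr rfl fun j hj => ?_
  have : j ≠ i := fun h => hi (h ▸ hj)
  simp [pmOf, Function.update_of_ne this]

lemma aux_flip_mem {d : ℕ} (S : Finset (Fin d)) (i : Fin d) (hi : i ∈ S)
    (x : Fin d → Bool) :
    chiChar S (pmOf (Function.update x i (!x i))) = - chiChar S (pmOf x) := by
  rw [chiChar, chiChar, ← Finset.mul_prod_erase _ _ hi, ← Finset.mul_prod_erase _ _ hi]
  have h1 : ∀ j ∈ S.erase i, pmOf (Function.update x i (!x i)) j = pmOf x j := by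
    intro j hj
    have : j ≠ i := Finset.ne_of_mem_erase hj
    simp [pmOf, Function.update_of_ne this]
  rw [Finset.prod_congr rfl h1]
  have : pmOf (Function.update x i (!x i)) i = - pmOf x i := by
    by_cases h : x i <;> simp [pmOf, h]
  rw [this]; ring

-- cancellation: for S not ⊆ J, sum over cube of χ_S * (junta on J) is 0
lemma aux_cancel {d : ℕ} (S J : Finset (Fin d)) (hS : ¬ S ⊆ J) (g : (Fin d → ℝ) → ℝ)
    (hg : ∀ (x : Fin d → Bool) (i : Fin d), i ∉ J →
      g (pmOf (Function.update x i (!x i))) = g (pmOf x)) :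
    ∑ x : Fin d → Bool, chiChar S (pmOf x) * g (pmOf x) = 0 := by
  obtain ⟨i, hiS, hiJ⟩ : ∃ i, i ∈ S ∧ i ∉ J := by
    rcases Finset.not_subset.mp hS with ⟨i, hi1, hi2⟩
    exact ⟨i, hi1, hi2⟩
  have hinv : Function.Involutive (fun x : Fin d → Bool => Function.update x i (!x i)) := by
    intro x
    simp [Function.update_idem]
  set σ := hinv.toPerm with hσ
  have key : ∀ x : Fin d → Bool,
      chiChar S (pmOf (σ x)) * g (pmOf (σ x)) = -(chiChar S (pmOf x) * g (pmOf x)) := by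
    intro x
    have h1 := aux_flip_mem S i hiS x
    have h2 := hg x i hiJ
    simp only [hσ, Function.Involutive.coe_toPerm]
    rw [h1, h2]; ring
  have := Equiv.sum_comp σ (fun x : Fin d → Bool => chiChar S (pmOf x) * g (pmOf x))
  simp only [key] at this
  rw [Finset.sum_neg_distrib] at this
  linarith [this]

-- Parseval-type bound
lemma aux_parseval {d : ℕ} (J : Finset (Fin d)) (c : Finset (Fin d) → ℝ) :
    ∑ x : Fin d → Bool, (∑ S ∈ J.powerset, c S * chiChar S (pmOf x))^2
      = (2:ℝ)^d * ∑ S ∈ J.powerset, (c S)^2 := by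
  have horth : ∀ S T : Finset (Fin d),
      ∑ x : Fin d → Bool, chiChar S (pmOf x) * chiChar T (pmOf x)
        = if S = T then (2:ℝ)^d else 0 := aux_orth
  have expand : ∀ x : Fin d → Bool, (∑ S ∈ J.powerset, c S * chiChar S (pmOf x))^2
      = ∑ S ∈ J.powerset, ∑ T ∈ J.powerset,
          (c S * c T) * (chiChar S (pmOf x) * chiChar T (pmOf x)) := by
    intro x
    rw [sq, Finset.sum_mul_sum]
    exact Finset.sum_congr rfl fun S _ => Finset.sum_congr rfl fun T _ => by ring
  simp only [expand]
  rw [Finset.sum_comm]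
  rw [Finset.sum_congr rfl fun S _ => Finset.sum_comm]
  have : ∀ S ∈ J.powerset, ∀ T ∈ J.powerset,
      ∑ x : Fin d → Bool, (c S * c T) * (chiChar S (pmOf x) * chiChar T (pmOf x))
        = (c S * c T) * (if S = T then (2:ℝ)^d else 0) := by
    intro S _ T _
    rw [← Finset.mul_sum, horth]
  rw [Finset.sum_congr rfl fun S hS => Finset.sum_congr rfl fun T hT => by
    rw [← Finset.mul_sum, horth]]
  rw [Finset.mul_sum]
  refine Finset.sum_congr rfl fun S hS => ?_
  rw [Finset.sum_eq_single S (fun T _ hT => by simp [Ne.symm hT]) (fun h => absurd hS h)]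
  simp [sq]; ring

lemma aux_sign (f h : ℝ) : |f| - 2 * |f - h| ≤ signFun h * f := by
  have h1 := le_abs_self (f - h)
  have h2 := neg_abs_le (f - h)
  unfold signFun
  split_ifs with hh <;> rcases abs_cases f with ⟨e1, e2⟩ | ⟨e1, e2⟩ <;> linarith

lemma aux_upoly (t : ℝ) (ht : 0 ≤ t) : t ≤ Upoly t := by
  unfold Upoly
  nlinarith [pow_nonneg ht 3, sq_nonneg t, ht]

lemma aux_sq_le (a bb : ℝ) (ha : 0 ≤ a) (hb : 0 ≤ bb) (h : a ^ 2 ≤ bb ^ 2) : a ≤ bb := by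
  nlinarith [sq_nonneg (a - bb), sq_nonneg (a + bb)]

/-- For `(X,Y) ∼ D` on `{-1,1}^d × {-1,1}`, `J ⊆ [d]` with `|J| = k`, and
coefficients `b_S` with `|b_S - a_S| ≤ 2^{-d}·η` for all `S ⊆ J`, the predictor
`sign(ĥ)` with `ĥ = Σ_{S⊆J} b_S·χ_S` satisfies
`P{Y ≠ sign(ĥ(X))} ≤ 1/2 - (1/2)·Σ_x |f^J(x)| + U(2^{k/2}·η)`. -/
theorem loss_sign_estimated_fourier_le
    (d k : ℕ) (D : Measure ((Fin d → ℝ) × ℝ)) [IsProbabilityMeasure D]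
    (hD : ∀ᵐ p ∂D, (∀ i, p.1 i = 1 ∨ p.1 i = -1) ∧ (p.2 = 1 ∨ p.2 = -1))
    (J : Finset (Fin d)) (hJ : J.card = k)
    (η : ℝ) (hη : 0 ≤ η) (b : Finset (Fin d) → ℝ)
    (hb : ∀ S ∈ J.powerset, |b S - coeffA D S| ≤ (1 / 2 ^ d : ℝ) * η) :
    (D {p | p.2 ≠ signFun (∑ S ∈ J.powerset, b S * chiChar S p.1)}).toReal
      ≤ 1 / 2 - (1 / 2) * (∑ x : Fin d → Bool, |fJ D J (pmOf x)|)
        + Upoly ((2 : ℝ) ^ ((k : ℝ) / 2) * η) := by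
  classical
  set hhat : (Fin d → ℝ) → ℝ := fun x => ∑ S ∈ J.powerset, b S * chiChar S x with hhat_def
  set s : (Fin d → ℝ) → ℝ := fun x => signFun (hhat x) with s_def
  -- measurability
  have hchi_m : ∀ S : Finset (Fin d), Measurable (fun x : Fin d → ℝ => chiChar S x) :=
    fun S => Finset.measurable_prod S (fun j _ => measurable_pi_apply j)
  have hh_m : Measurable hhat :=
    Finset.measurable_sum _ fun S _ => (hchi_m S).const_mul (b S)
  have hsign_m : Measurable signFun :=
    Measurable.ite (measurableSet_le measurable_const measurable_id) measurable_const
      measurable_const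
  have hs_m : Measurable s := hsign_m.comp hh_m
  -- sign values
  have hs_pm : ∀ t : ℝ, signFun t = 1 ∨ signFun t = -1 := by
    intro t; unfold signFun; split_ifs <;> simp
  -- integrability helper
  have hInt : ∀ g : ((Fin d → ℝ) × ℝ) → ℝ, Measurable g → (∀ᵐ p ∂D, |g p| ≤ 1) →
      Integrable g D := by
    intro g hm hbd
    exact (integrable_const (1 : ℝ)).mono' hm.aestronglyMeasurable (by simpa using hbd)
  have hchi_bd : ∀ S : Finset (Fin d), ∀ᵐ p ∂D, |p.2 * chiChar S p.1| ≤ 1 := by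
    intro S
    filter_upwards [hD] with p hp
    have h2 : |p.2| = 1 := by rcases hp.2 with h | h <;> simp [h]
    have h1 : |chiChar S p.1| = 1 := by
      rw [chiChar, Finset.abs_prod]
      refine Finset.prod_eq_one fun j _ => ?_
      rcases hp.1 j with h | h <;> simp [h]
    rw [abs_mul, h1, h2, mul_one]
  have hIntS : ∀ S : Finset (Fin d), Integrable (fun p => p.2 * chiChar S p.1) D :=
    fun S => hInt _ (measurable_snd.mul ((hchi_m S).comp measurable_fst)) (hchi_bd S)
  have hIntYs : Integrable (fun p => p.2 * s p.1) D := by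
    refine hInt _ (measurable_snd.mul (hs_m.comp measurable_fst)) ?_
    filter_upwards [hD] with p hp
    have h2 : |p.2| = 1 := by rcases hp.2 with h | h <;> simp [h]
    have h1 : |s p.1| = 1 := by rcases hs_pm (hhat p.1) with h | h <;> simp [s_def, h]
    rw [abs_mul, h1, h2, mul_one]
  -- Step 1: probability = 1/2 - 1/2 ∫ Y s
  have hAm : MeasurableSet {p : (Fin d → ℝ) × ℝ | p.2 ≠ s p.1} :=
    (measurableSet_eq_fun measurable_snd (hs_m.comp measurable_fst)).compl
  have step1 : (D {p | p.2 ≠ s p.1}).toReal = 1 / 2 - (1 / 2) * ∫ p, p.2 * s p.1 ∂D := by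
    rw [← measureReal_def, ← integral_indicator_one hAm]
    have hae : ∀ᵐ p ∂D, Set.indicator {p : (Fin d → ℝ) × ℝ | p.2 ≠ s p.1}
        (1 : ((Fin d → ℝ) × ℝ) → ℝ) p = 1 / 2 - (1 / 2) * (p.2 * s p.1) := by
      filter_upwards [hD] with p hp
      rcases hs_pm (hhat p.1) with h | h <;> rcases hp.2 with h2 | h2 <;>
        simp [Set.indicator_apply, Set.mem_setOf_eq, s_def, h, h2] <;> norm_num
    rw [integral_congr_ae hae, integral_sub (integrable_const _) (hIntYs.const_mul _),
      integral_const_mul, integral_const]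
    simp
  -- Step 2: ∫ Y s = ∑_x s(x) fFull(x)
  set fFull : (Fin d → Bool) → ℝ :=
    fun x => ∑ S ∈ (Finset.univ : Finset (Fin d)).powerset, coeffA D S * chiChar S (pmOf x)
    with fFull_def
  have step2 : ∫ p, p.2 * s p.1 ∂D = ∑ x : Fin d → Bool, s (pmOf x) * fFull x := by
    have hae : ∀ᵐ p ∂D, p.2 * s p.1
        = ∑ x : Fin d → Bool, ∑ S ∈ (Finset.univ : Finset (Fin d)).powerset,
            (s (pmOf x) * (1 / 2 ^ d) * chiChar S (pmOf x)) * (p.2 * chiChar S p.1) := by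
      filter_upwards [hD] with p hp
      set a : Fin d → Bool := fun i => decide (p.1 i = 1) with ha_def
      have hpa : p.1 = pmOf a := by
        funext i
        rcases hp.1 i with h | h
        · simp [pmOf, ha_def, h]
        · have h' : ¬ p.1 i = 1 := by rw [h]; norm_num
          simp [pmOf, ha_def, h, h']
      have hx : ∀ x : Fin d → Bool, ∑ S ∈ (Finset.univ : Finset (Fin d)).powerset,
            (s (pmOf x) * (1 / 2 ^ d) * chiChar S (pmOf x)) * (p.2 * chiChar S p.1)
          = (s (pmOf x) * (1 / 2 ^ d) * p.2) * (if a = x then (2:ℝ)^d else 0) := by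
        intro x
        rw [← aux_delta a x, Finset.mul_sum, hpa]
        exact Finset.sum_congr rfl fun S _ => by ring
      rw [Finset.sum_congr rfl fun x _ => hx x,
        Finset.sum_eq_single a (fun x _ hx2 => by rw [if_neg (Ne.symm hx2), mul_zero])
          (fun h => absurd (Finset.mem_univ a) h), if_pos rfl, hpa]
      have h2d : (2:ℝ)^d ≠ 0 := by positivity
      field_simp
    rw [integral_congr_ae hae,
      integral_finset_sum _ (fun x _ => integrable_finset_sum _
        (fun S _ => (hIntS S).const_mul _)),
      Finset.sum_congr rfl fun x _ => integral_finset_sum _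
        (fun S _ => (hIntS S).const_mul _)]
    refine Finset.sum_congr rfl fun x _ => ?_
    rw [fFull_def, Finset.mul_sum]
    refine Finset.sum_congr rfl fun S _ => ?_
    rw [integral_const_mul]
    simp only [coeffA]
    ring
  -- Step 3: replace fFull by fJ
  have step3 : ∑ x : Fin d → Bool, s (pmOf x) * fFull x
      = ∑ x : Fin d → Bool, s (pmOf x) * fJ D J (pmOf x) := by
    have hjunta : ∀ (x : Fin d → Bool) (i : Fin d), i ∉ J →
        s (pmOf (Function.update x i (!x i))) = s (pmOf x) := by
      intro x i hi
      have hh : hhat (pmOf (Function.update x i (!x i))) = hhat (pmOf x) := by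
        refine Finset.sum_congr rfl fun S hS => ?_
        have hiS : i ∉ S := fun h => hi (Finset.mem_powerset.mp hS h)
        rw [aux_flip_not_mem S i hiS]
      simp only [s_def, hh]
    have hzero : ∀ S ∈ (Finset.univ : Finset (Fin d)).powerset \ J.powerset,
        ∑ x : Fin d → Bool, chiChar S (pmOf x) * s (pmOf x) = 0 := by
      intro S hS
      have hns : ¬ S ⊆ J := fun h => (Finset.mem_sdiff.mp hS).2 (Finset.mem_powerset.mpr h)
      exact aux_cancel S J hns s hjunta
    have hdecomp : ∀ x : Fin d → Bool, s (pmOf x) * fFull x = s (pmOf x) * fJ D J (pmOf x)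
        + ∑ S ∈ (Finset.univ : Finset (Fin d)).powerset \ J.powerset,
            coeffA D S * (chiChar S (pmOf x) * s (pmOf x)) := by
      intro x
      simp only [fFull_def, fJ]
      have h2 : ∀ T : Finset (Finset (Fin d)),
          s (pmOf x) * ∑ S ∈ T, coeffA D S * chiChar S (pmOf x)
            = ∑ S ∈ T, coeffA D S * (chiChar S (pmOf x) * s (pmOf x)) := fun T => by
        rw [Finset.mul_sum]; exact Finset.sum_congr rfl fun S _ => by ring
      rw [h2, h2, ← Finset.sum_sdiff (Finset.powerset_mono.mpr (Finset.subset_univ J))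
        (f := fun S => coeffA D S * (chiChar S (pmOf x) * s (pmOf x))), add_comm]
    rw [Finset.sum_congr rfl fun x _ => hdecomp x, Finset.sum_add_distrib]
    have hz : ∑ x : Fin d → Bool, ∑ S ∈ (Finset.univ : Finset (Fin d)).powerset \ J.powerset,
        coeffA D S * (chiChar S (pmOf x) * s (pmOf x)) = 0 := by
      rw [Finset.sum_comm]
      refine Finset.sum_eq_zero fun S hS => ?_
      rw [← Finset.mul_sum, hzero S hS, mul_zero]
    rw [hz, add_zero]
  -- Step 4: pointwise lower bound
  have step4 : ∑ x : Fin d → Bool, (|fJ D J (pmOf x)| - 2 * |fJ D J (pmOf x) - hhat (pmOf x)|)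
      ≤ ∑ x : Fin d → Bool, s (pmOf x) * fJ D J (pmOf x) :=
    Finset.sum_le_sum fun x _ => aux_sign (fJ D J (pmOf x)) (hhat (pmOf x))
  -- Step 5: Cauchy–Schwarz bound
  have step5 : ∑ x : Fin d → Bool, |fJ D J (pmOf x) - hhat (pmOf x)|
      ≤ (2 : ℝ) ^ ((k : ℝ) / 2) * η := by
    set c : Finset (Fin d) → ℝ := fun S => coeffA D S - b S with c_def
    have hdiff : ∀ x : Fin d → Bool, fJ D J (pmOf x) - hhat (pmOf x)
        = ∑ S ∈ J.powerset, c S * chiChar S (pmOf x) := by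
      intro x
      simp only [fJ, hhat_def, c_def, ← Finset.sum_sub_distrib]
      exact Finset.sum_congr rfl fun S _ => by ring
    have hCS := Finset.sum_mul_sq_le_sq_mul_sq Finset.univ (fun _ : Fin d → Bool => (1:ℝ))
      (fun x => |fJ D J (pmOf x) - hhat (pmOf x)|)
    simp only [one_mul, one_pow, sq_abs] at hCS
    have hcard : ∑ _x : Fin d → Bool, (1:ℝ) = (2:ℝ)^d := by
      simp [Finset.card_univ]
    have hpar : ∑ x : Fin d → Bool, (fJ D J (pmOf x) - hhat (pmOf x))^2
        = (2:ℝ)^d * ∑ S ∈ J.powerset, (c S)^2 := by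
      rw [Finset.sum_congr rfl fun x _ => by rw [hdiff x]]
      exact aux_parseval J c
    have hcsq : ∑ S ∈ J.powerset, (c S)^2 ≤ (2:ℝ)^k * ((1/2^d)*η)^2 := by
      have hcard2 : (J.powerset.card : ℝ) = 2^k := by
        rw [Finset.card_powerset, hJ]; push_cast; ring
      calc ∑ S ∈ J.powerset, (c S)^2 ≤ ∑ _S ∈ J.powerset, ((1/2^d)*η)^2 := by
            refine Finset.sum_le_sum fun S hS => ?_
            have h1 : |c S| ≤ (1/2^d)*η := by
              rw [c_def]; dsimp only; rw [abs_sub_comm]; exact hb S hS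
            calc (c S)^2 = |c S|^2 := (sq_abs _).symm
              _ ≤ ((1/2^d)*η)^2 := pow_le_pow_left₀ (abs_nonneg _) h1 2
        _ = (2:ℝ)^k * ((1/2^d)*η)^2 := by rw [Finset.sum_const, nsmul_eq_mul, hcard2]
    have hrpow : ((2:ℝ)^((k:ℝ)/2))^2 = (2:ℝ)^k := by
      rw [← Real.rpow_natCast ((2:ℝ)^((k:ℝ)/2)) 2, ← Real.rpow_mul (by norm_num : (0:ℝ) ≤ 2)]
      rw [show (k:ℝ)/2 * ((2:ℕ):ℝ) = (k:ℝ) by push_cast; ring]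
      exact Real.rpow_natCast 2 k
    refine aux_sq_le _ _ (Finset.sum_nonneg fun x _ => abs_nonneg _) (by positivity) ?_
    calc (∑ x : Fin d → Bool, |fJ D J (pmOf x) - hhat (pmOf x)|)^2
        ≤ (2:ℝ)^d * ((2:ℝ)^d * ∑ S ∈ J.powerset, (c S)^2) := by
          rw [← hpar, ← hcard]; exact hCS
      _ ≤ (2:ℝ)^d * ((2:ℝ)^d * ((2:ℝ)^k * ((1/2^d)*η)^2)) := by
          exact mul_le_mul_of_nonneg_left
            (mul_le_mul_of_nonneg_left hcsq (by positivity)) (by positivity)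
      _ = ((2:ℝ)^((k:ℝ)/2) * η)^2 := by
          rw [show ((2:ℝ)^((k:ℝ)/2) * η)^2 = (2:ℝ)^k * η^2 by rw [mul_pow, hrpow]]
          field_simp
  -- Combine
  have hU : (2 : ℝ) ^ ((k : ℝ) / 2) * η ≤ Upoly ((2 : ℝ) ^ ((k : ℝ) / 2) * η) :=
    aux_upoly _ (by positivity)
  have hsum : ∑ x : Fin d → Bool, (|fJ D J (pmOf x)| - 2 * |fJ D J (pmOf x) - hhat (pmOf x)|)
      = (∑ x : Fin d → Bool, |fJ D J (pmOf x)|)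
        - 2 * ∑ x : Fin d → Bool, |fJ D J (pmOf x) - hhat (pmOf x)| := by
    rw [Finset.sum_sub_distrib, Finset.mul_sum]
  have : (D {p | p.2 ≠ s p.1}).toReal
      ≤ 1 / 2 - (1 / 2) * (∑ x : Fin d → Bool, |fJ D J (pmOf x)|)
        + (2 : ℝ) ^ ((k : ℝ) / 2) * η := by
    rw [step1, step2, step3]
    rw [hsum] at step4
    linarith
  exact this.trans (by linarith)
end

section
/- Let (X,Y) be a pair of random variables where Y takes values in {-1,1}, let p be a real-valued measurable square-integrable function of X, and let θ be a real random variable independent of (X,Y) with probability density f_θ(t) = 1 − |t| on [−1,1] (and 0 elsewhere). Then P{Y ≠ sign(p(X) − θ)} ≤ (1/2)·E[(Y − p(X))²], where the probability on the left is over both (X,Y) and θ. -/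
open MeasureTheory ProbabilityTheory

section Helpers
open Set

lemma lint_Ioc_le (a b : ℝ) :
    ∫⁻ t in Set.Ioc a b, ENNReal.ofReal (b - t) ∂volume ≤ ENNReal.ofReal ((b - a)^2 / 2) := by
  rcases le_or_gt b a with h | h
  · rw [Set.Ioc_eq_empty (by exact not_lt.mpr h), Measure.restrict_empty, lintegral_zero_measure]
    exact zero_le'
  · have hint : IntegrableOn (fun t => b - t) (Set.Ioc a b) volume := by
      apply (continuous_const.sub continuous_id).integrableOn_Ioc
    have hnn : 0 ≤ᶠ[ae (volume.restrict (Set.Ioc a b))] fun t => b - t := by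
      rw [Filter.EventuallyLE, ae_restrict_iff' measurableSet_Ioc]
      exact ae_of_all _ fun t ht => by simp only [Pi.zero_apply]; linarith [ht.2]
    rw [← ofReal_integral_eq_lintegral_ofReal hint hnn]
    have : ∫ t in Set.Ioc a b, (b - t) = (b - a)^2 / 2 := by
      rw [← intervalIntegral.integral_of_le h.le]
      rw [intervalIntegral.integral_sub intervalIntegrable_const intervalIntegral.intervalIntegrable_id,
        intervalIntegral.integral_const, integral_id]
      simp only [smul_eq_mul]; ring
    rw [this]

lemma lint_Ioc_le' (a b : ℝ) :
    ∫⁻ t in Set.Ioc a b, ENNReal.ofReal (t - a) ∂volume ≤ ENNReal.ofReal ((b - a)^2 / 2) := by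
  rcases le_or_gt b a with h | h
  · rw [Set.Ioc_eq_empty (by exact not_lt.mpr h), Measure.restrict_empty, lintegral_zero_measure]
    exact zero_le'
  · have hint : IntegrableOn (fun t => t - a) (Set.Ioc a b) volume := by
      apply (continuous_id.sub continuous_const).integrableOn_Ioc
    have hnn : 0 ≤ᶠ[ae (volume.restrict (Set.Ioc a b))] fun t => t - a := by
      rw [Filter.EventuallyLE, ae_restrict_iff' measurableSet_Ioc]
      exact ae_of_all _ fun t ht => by simp only [Pi.zero_apply]; linarith [ht.1]
    rw [← ofReal_integral_eq_lintegral_ofReal hint hnn]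
    have : ∫ t in Set.Ioc a b, (t - a) = (b - a)^2 / 2 := by
      rw [← intervalIntegral.integral_of_le h.le]
      rw [intervalIntegral.integral_sub intervalIntegral.intervalIntegrable_id intervalIntegrable_const,
        intervalIntegral.integral_const, integral_id]
      simp only [smul_eq_mul]; ring
    rw [this]

lemma eta_Ioi_le (q : ℝ) :
    (volume.withDensity fun t => ENNReal.ofReal (1 - |t|)) (Set.Ioi q)
      ≤ ENNReal.ofReal ((1 - q)^2 / 2) := by
  rw [withDensity_apply _ measurableSet_Ioi]
  calc ∫⁻ t in Set.Ioi q, ENNReal.ofReal (1 - |t|) ∂volume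
      ≤ ∫⁻ t in Set.Ioi q, (Set.Ioc q 1).indicator (fun t => ENNReal.ofReal (1 - t)) t ∂volume := by
        apply setLIntegral_mono' measurableSet_Ioi
        intro t ht
        by_cases h1 : t ≤ 1
        · rw [Set.indicator_of_mem (Set.mem_Ioc.mpr ⟨ht, h1⟩)]
          exact ENNReal.ofReal_le_ofReal (by linarith [le_abs_self t])
        · rw [Set.indicator_of_notMem (fun hm => h1 (Set.mem_Ioc.mp hm).2)]
          simp only [nonpos_iff_eq_zero, ENNReal.ofReal_eq_zero]
          linarith [le_abs_self t]
    _ ≤ ∫⁻ t, (Set.Ioc q 1).indicator (fun t => ENNReal.ofReal (1 - t)) t ∂volume :=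
        setLIntegral_le_lintegral _ _
    _ = ∫⁻ t in Set.Ioc q 1, ENNReal.ofReal (1 - t) ∂volume :=
        lintegral_indicator measurableSet_Ioc _
    _ ≤ ENNReal.ofReal ((1 - q)^2 / 2) := lint_Ioc_le q 1

lemma eta_Iic_le (q : ℝ) :
    (volume.withDensity fun t => ENNReal.ofReal (1 - |t|)) (Set.Iic q)
      ≤ ENNReal.ofReal ((q + 1)^2 / 2) := by
  rw [withDensity_apply _ measurableSet_Iic]
  calc ∫⁻ t in Set.Iic q, ENNReal.ofReal (1 - |t|) ∂volume
      ≤ ∫⁻ t in Set.Iic q, (Set.Ioc (-1) q).indicator (fun t => ENNReal.ofReal (t - (-1))) t ∂volume := by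
        apply setLIntegral_mono' measurableSet_Iic
        intro t ht
        by_cases h1 : -1 < t
        · rw [Set.indicator_of_mem (Set.mem_Ioc.mpr ⟨h1, ht⟩)]
          exact ENNReal.ofReal_le_ofReal (by cases abs_cases t <;> linarith)
        · rw [Set.indicator_of_notMem (fun hm => h1 (Set.mem_Ioc.mp hm).1)]
          simp only [nonpos_iff_eq_zero, ENNReal.ofReal_eq_zero]
          cases abs_cases t <;> linarith
    _ ≤ ∫⁻ t, (Set.Ioc (-1) q).indicator (fun t => ENNReal.ofReal (t - (-1))) t ∂volume :=
        setLIntegral_le_lintegral _ _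
    _ = ∫⁻ t in Set.Ioc (-1) q, ENNReal.ofReal (t - (-1)) ∂volume :=
        lintegral_indicator measurableSet_Ioc _
    _ ≤ ENNReal.ofReal ((q + 1)^2 / 2) := by
        have := lint_Ioc_le' (-1) q
        simpa [sub_neg_eq_add] using this

end Helpers

/-- Let `Y` be `{-1,1}`-valued, `p` a square-integrable function of `X`,
and `θ` a random threshold independent of `(X,Y)` with density `f_θ(t) = 1 - |t|` on
`[-1,1]`. Then `P{Y ≠ sign(p(X) - θ)} ≤ (1/2)·E[(Y - p(X))²]`. -/
theorem randomized_rounding_loss_le_half_square_loss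
    {Ω 𝓧 : Type*} [MeasurableSpace Ω] [MeasurableSpace 𝓧]
    (μ : Measure Ω) [IsProbabilityMeasure μ]
    (X : Ω → 𝓧) (Y : Ω → ℝ) (θ : Ω → ℝ) (p : 𝓧 → ℝ)
    (hX : Measurable X) (hY : Measurable Y) (hθ : Measurable θ)
    (hYpm : ∀ ω, Y ω = 1 ∨ Y ω = -1)
    (hp : Measurable p) (hp2 : MemLp (fun ω => p (X ω)) 2 μ)
    (hindep : IndepFun (fun ω => (X ω, Y ω)) θ μ)
    (hlaw : Measure.map θ μ
      = (volume : Measure ℝ).withDensity fun t => ENNReal.ofReal (1 - |t|)) :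
    (μ {ω | Y ω ≠ signFun (p (X ω) - θ ω)}).toReal
      ≤ (1 / 2) * ∫ ω, (Y ω - p (X ω)) ^ 2 ∂μ := by
  classical
  set ν : Measure (𝓧 × ℝ) := μ.map (fun ω => (X ω, Y ω)) with hν
  set η : Measure ℝ := μ.map θ with hη
  have hXY : Measurable fun ω => (X ω, Y ω) := hX.prodMk hY
  have hsign : Measurable signFun :=
    Measurable.ite (measurableSet_le measurable_const measurable_id)
      measurable_const measurable_const
  haveI : IsProbabilityMeasure η := Measure.isProbabilityMeasure_map hθ.aemeasurable
  haveI : IsProbabilityMeasure ν := Measure.isProbabilityMeasure_map hXY.aemeasurable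
  set B : Set ((𝓧 × ℝ) × ℝ) := {z | z.1.2 ≠ signFun (p z.1.1 - z.2)} with hB
  have hg : Measurable fun z : (𝓧 × ℝ) × ℝ => signFun (p z.1.1 - z.2) :=
    hsign.comp ((hp.comp (measurable_fst.comp measurable_fst)).sub measurable_snd)
  have hBmeas : MeasurableSet B :=
    (measurableSet_eq_fun (measurable_snd.comp measurable_fst) hg).compl
  have hmap : μ.map (fun ω => ((X ω, Y ω), θ ω)) = ν.prod η :=
    (indepFun_iff_map_prod_eq_prod_map_map hXY.aemeasurable hθ.aemeasurable).mp hindep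
  have hA : μ {ω | Y ω ≠ signFun (p (X ω) - θ ω)} = (ν.prod η) B := by
    rw [← hmap, Measure.map_apply (hXY.prodMk hθ) hBmeas]
    rfl
  -- a.e. bound on slices
  have hae : ∀ᵐ xy ∂ν, xy.2 = 1 ∨ xy.2 = -1 := by
    have hms : MeasurableSet {xy : 𝓧 × ℝ | xy.2 = 1 ∨ xy.2 = -1} := by
      rw [Set.setOf_or]
      exact (measurableSet_eq_fun measurable_snd measurable_const).union
        (measurableSet_eq_fun measurable_snd measurable_const)
    rw [hν, ae_map_iff hXY.aemeasurable hms]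
    exact ae_of_all _ hYpm
  have hslice : ∀ᵐ xy ∂ν, η (Prod.mk xy ⁻¹' B)
      ≤ ENNReal.ofReal ((xy.2 - p xy.1)^2 / 2) := by
    filter_upwards [hae] with xy hxy
    rcases hxy with h1 | h1
    · have hset : Prod.mk xy ⁻¹' B = Set.Ioi (p xy.1) := by
        ext t
        show (xy.2 ≠ signFun (p xy.1 - t)) ↔ p xy.1 < t
        rw [h1]
        unfold signFun
        split_ifs with h
        · constructor
          · intro hne; exact absurd rfl hne
          · intro hlt; exfalso; linarith
        · constructor
          · intro _; linarith [not_le.mp h]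
          · intro _; norm_num
      have h2 : (xy.2 - p xy.1)^2 = (1 - p xy.1)^2 := by rw [h1]
      rw [hset, h2, hlaw]
      exact eta_Ioi_le _
    · have hset : Prod.mk xy ⁻¹' B = Set.Iic (p xy.1) := by
        ext t
        show (xy.2 ≠ signFun (p xy.1 - t)) ↔ t ≤ p xy.1
        rw [h1]
        unfold signFun
        split_ifs with h
        · constructor
          · intro _; linarith
          · intro _; norm_num
        · constructor
          · intro hne; exact absurd rfl hne
          · intro hle; exfalso; exact h (by linarith)
      have h2 : (xy.2 - p xy.1)^2 = (p xy.1 + 1)^2 := by rw [h1]; ring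
      rw [hset, h2, hlaw]
      exact eta_Iic_le _
  -- integrability
  have hY2 : MemLp Y 2 μ :=
    MemLp.of_bound hY.aestronglyMeasurable 1
      (ae_of_all _ fun ω => by rcases hYpm ω with h | h <;> simp [h])
  have hIsq : Integrable (fun ω => (Y ω - p (X ω))^2) μ := (hY2.sub hp2).integrable_sq
  have hImeas : AEStronglyMeasurable (fun xy : 𝓧 × ℝ => (xy.2 - p xy.1)^2 / 2) ν :=
    (((measurable_snd.sub (hp.comp measurable_fst)).pow_const 2).div_const 2).aestronglyMeasurable
  have hint2 : Integrable (fun xy : 𝓧 × ℝ => (xy.2 - p xy.1)^2 / 2) ν := by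
    rw [hν, integrable_map_measure hImeas hXY.aemeasurable]
    exact (hIsq.div_const 2)
  have heq : ∫⁻ xy, ENNReal.ofReal ((xy.2 - p xy.1)^2 / 2) ∂ν
      = ENNReal.ofReal (∫ xy, (xy.2 - p xy.1)^2 / 2 ∂ν) :=
    (ofReal_integral_eq_lintegral_ofReal hint2
      (ae_of_all _ fun xy => by positivity)).symm
  have hcv : ∫ xy, (xy.2 - p xy.1)^2 / 2 ∂ν = ∫ ω, (Y ω - p (X ω))^2 / 2 ∂μ := by
    rw [hν, integral_map hXY.aemeasurable hImeas]
  have hkey : (ν.prod η) B ≤ ENNReal.ofReal ((1/2) * ∫ ω, (Y ω - p (X ω))^2 ∂μ) := by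
    rw [Measure.prod_apply hBmeas]
    calc ∫⁻ xy, η (Prod.mk xy ⁻¹' B) ∂ν
        ≤ ∫⁻ xy, ENNReal.ofReal ((xy.2 - p xy.1)^2 / 2) ∂ν := lintegral_mono_ae hslice
      _ = ENNReal.ofReal (∫ xy, (xy.2 - p xy.1)^2 / 2 ∂ν) := heq
      _ = ENNReal.ofReal ((1/2) * ∫ ω, (Y ω - p (X ω))^2 ∂μ) := by
          rw [hcv, integral_div]; congr 1; ring
  rw [hA]
  calc ((ν.prod η) B).toReal
      ≤ (ENNReal.ofReal ((1/2) * ∫ ω, (Y ω - p (X ω))^2 ∂μ)).toReal :=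
        ENNReal.toReal_mono ENNReal.ofReal_ne_top hkey
    _ = (1/2) * ∫ ω, (Y ω - p (X ω))^2 ∂μ := by
        rw [ENNReal.toReal_ofReal]
        have h0 : 0 ≤ ∫ ω, (Y ω - p (X ω))^2 ∂μ :=
          integral_nonneg fun ω => sq_nonneg _
        linarith
end
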